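/- The asymptotic MSE of the bivariate linear regression on φ₁, φ₂ is at most that of the univariate regression on h(φ₁,φ₂) if and only if σ²/(σ²_f(n−1)) ≥ (ρ²_{φ₁,f} + ρ²_{φ₂,f} − 2ρ_{φ₁,f}ρ_{φ₂,f}ρ_{φ₁,φ₂})/(1 − ρ²_{φ₁,φ₂}) − ρ²_{f,h}, where ρ denotes Pearson correlation. -/
import Mathlib


/-- The asymptotic MSE of the bivariate regression is at most that of the univariate
(aggregated) regression, i.e. `Δ_var ≥ Δ_bias`, if and only if
`σ²/(σ²_f(n-1)) ≥ (ρ²_{φ₁,f} + ρ²_{φ₂,f} - 2ρ_{φ₁,f}ρ_{φ₂,f}ρ_{φ₁,φ₂})/(1 - ρ²_{φ₁,φ₂}) - ρ²_{f,h}`. -/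
theorem stmt_10 (n : ℕ) (hn : 2 ≤ n) (σ2 sf s1 s2 sh c1 c2 c12 ch : ℝ)
    (hsf : 0 < sf) (hs1 : 0 < s1) (hs2 : 0 < s2) (hsh : 0 < sh)
    (ρ1 ρ2 ρ12 ρfh : ℝ)
    (hρ1 : ρ1 = c1 / (Real.sqrt s1 * Real.sqrt sf))
    (hρ2 : ρ2 = c2 / (Real.sqrt s2 * Real.sqrt sf))
    (hρ12 : ρ12 = c12 / (Real.sqrt s1 * Real.sqrt s2))
    (hρfh : ρfh = ch / (Real.sqrt sh * Real.sqrt sf))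
    (hcorr : ρ12 ^ 2 < 1) :
    (σ2 / ((n : ℝ) - 1)
        ≥ -(ch ^ 2 / sh)
          + (s1 * c2 ^ 2 + s2 * c1 ^ 2 - 2 * c1 * c2 * c12) / (s1 * s2 - c12 ^ 2))
      ↔ σ2 / (sf * ((n : ℝ) - 1))
          ≥ (ρ1 ^ 2 + ρ2 ^ 2 - 2 * ρ1 * ρ2 * ρ12) / (1 - ρ12 ^ 2) - ρfh ^ 2 := by
  have h1 : Real.sqrt s1 ^ 2 = s1 := Real.sq_sqrt hs1.le
  have h2 : Real.sqrt s2 ^ 2 = s2 := Real.sq_sqrt hs2.le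
  have hh : Real.sqrt sh ^ 2 = sh := Real.sq_sqrt hsh.le
  have hf : Real.sqrt sf ^ 2 = sf := Real.sq_sqrt hsf.le
  have p1 : 0 < Real.sqrt s1 := Real.sqrt_pos.mpr hs1
  have p2 : 0 < Real.sqrt s2 := Real.sqrt_pos.mpr hs2
  have ph : 0 < Real.sqrt sh := Real.sqrt_pos.mpr hsh
  have pf : 0 < Real.sqrt sf := Real.sqrt_pos.mpr hsf
  have C : ρ12 ^ 2 = c12 ^ 2 / (s1 * s2) := by
    rw [hρ12, div_pow, mul_pow, h1, h2]
  have hden : 0 < s1 * s2 - c12 ^ 2 := by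
    have : c12 ^ 2 / (s1 * s2) < 1 := C ▸ hcorr
    have := (div_lt_one (by positivity)).mp this
    linarith
  have A : ρ1 ^ 2 = c1 ^ 2 / (s1 * sf) := by
    rw [hρ1, div_pow, mul_pow, h1, hf]
  have B : ρ2 ^ 2 = c2 ^ 2 / (s2 * sf) := by
    rw [hρ2, div_pow, mul_pow, h2, hf]
  have D : ρfh ^ 2 = ch ^ 2 / (sh * sf) := by
    rw [hρfh, div_pow, mul_pow, hh, hf]
  have e : Real.sqrt s1 * Real.sqrt sf * (Real.sqrt s2 * Real.sqrt sf * (Real.sqrt s1 * Real.sqrt s2))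
      = s1 * (s2 * sf) := by
    linear_combination (Real.sqrt s2 ^ 2 * Real.sqrt sf ^ 2) * h1 + (s1 * Real.sqrt sf ^ 2) * h2
      + (s1 * s2) * hf
  have P : ρ1 * (ρ2 * ρ12) = c1 * (c2 * c12) / (s1 * (s2 * sf)) := by
    rw [hρ1, hρ2, hρ12, div_mul_div_comm, div_mul_div_comm, e]
  have key : (ρ1 ^ 2 + ρ2 ^ 2 - 2 * ρ1 * ρ2 * ρ12) / (1 - ρ12 ^ 2) - ρfh ^ 2
      = (-(ch ^ 2 / sh)
          + (s1 * c2 ^ 2 + s2 * c1 ^ 2 - 2 * c1 * c2 * c12) / (s1 * s2 - c12 ^ 2)) / sf := by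
    rw [A, B, C, D, mul_assoc (2*ρ1) ρ2 ρ12, mul_assoc 2 ρ1 (ρ2*ρ12), P]
    field_simp
    ring
  rw [key, show σ2 / (sf * ((n : ℝ) - 1)) = (σ2 / ((n : ℝ) - 1)) / sf by
    rw [mul_comm sf _, ← div_div], ge_iff_le, ge_iff_le]
  exact (div_le_div_iff_of_pos_right hsf).symm
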